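/- In the parallel coupon collector problem with N ≥ 2 coupon types and C ≥ 1 collectors, the cover time satisfies E[T(N, C)] ≥ log(C)/6. -/

import Mathlib

open MeasureTheory ProbabilityTheory
open scoped ENNReal

/-- The cover time of the parallel coupon collector problem: the first round
`t` by which each of the `C` collectors has collected each of the `N` coupon
types (`ω s c` is the coupon type picked by collector `c` in round `s`). -/
noncomputable def coverTime {N C : ℕ} (ω : ℕ → Fin C → Fin N) : ℕ :=
  sInf {t | ∀ c : Fin C, ∀ x : Fin N, ∃ s < t, ω s c = x}

/-- `μ` is the law of the picks in the parallel coupon collector problem with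
`N` coupon types and `C` collectors: the picks of different rounds are
independent, and in each round the joint pick of the `C` collectors is uniform
among all `N ^ C` possibilities (equivalently, each collector independently
picks a coupon type uniformly at random). -/
def IsCouponMeasure {N C : ℕ} (μ : MeasureTheory.Measure (ℕ → Fin C → Fin N)) : Prop :=
  MeasureTheory.IsProbabilityMeasure μ ∧
    ProbabilityTheory.iIndepFun (fun t (ω : ℕ → Fin C → Fin N) => ω t) μ ∧
    ∀ t : ℕ, ∀ f : Fin C → Fin N, μ {ω | ω t = f} = ((N : ENNReal) ^ C)⁻¹

namespace CouponAux

variable {N C : ℕ} {μ : Measure (ℕ → Fin C → Fin N)}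

lemma meas_single (hμ : IsCouponMeasure μ) (t : ℕ) (f : Fin C → Fin N) :
    μ ((fun ω : ℕ → Fin C → Fin N => ω t) ⁻¹' {f}) = ((N : ℝ≥0∞) ^ C)⁻¹ := by
  have h := hμ.2.2 t f
  have he : (fun ω : ℕ → Fin C → Fin N => ω t) ⁻¹' {f} = {ω | ω t = f} := rfl
  rw [he, h]

lemma meas_cylinder (hμ : IsCouponMeasure μ) (t : ℕ) (sets : ℕ → Set (Fin C → Fin N)) :
    μ (⋂ s ∈ Finset.range t, (fun ω : ℕ → Fin C → Fin N => ω s) ⁻¹' sets s)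
      = ∏ s ∈ Finset.range t, μ ((fun ω : ℕ → Fin C → Fin N => ω s) ⁻¹' sets s) :=
  hμ.2.1.measure_inter_preimage_eq_mul (Finset.range t)
    (fun i _ => (Set.toFinite (sets i)).measurableSet)

lemma meas_fixed (hμ : IsCouponMeasure μ) (t : ℕ) (g : ℕ → Fin C → Fin N) :
    μ (⋂ s ∈ Finset.range t, (fun ω : ℕ → Fin C → Fin N => ω s) ⁻¹' {g s})
      = (((N : ℝ≥0∞) ^ C)⁻¹) ^ t := by
  rw [meas_cylinder hμ t (fun s => {g s}),
    Finset.prod_congr rfl (fun s _ => meas_single hμ s (g s)), Finset.prod_const,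
    Finset.card_range]

lemma meas_event (hμ : IsCouponMeasure μ) (hN : 0 < N) {t : ℕ}
    (G : Finset (Fin t → Fin C → Fin N)) :
    μ {ω : ℕ → Fin C → Fin N | (fun s : Fin t => ω (s : ℕ)) ∈ G}
      = G.card * (((N : ℝ≥0∞) ^ C)⁻¹) ^ t := by
  classical
  set x0 : Fin N := ⟨0, hN⟩ with hx0
  set ext : (Fin t → Fin C → Fin N) → ℕ → Fin C → Fin N :=
    fun g s => if h : s < t then g ⟨s, h⟩ else fun _ => x0 with hext
  have hset : {ω : ℕ → Fin C → Fin N | (fun s : Fin t => ω (s : ℕ)) ∈ G}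
      = ⋃ g ∈ G, ⋂ s ∈ Finset.range t, (fun ω : ℕ → Fin C → Fin N => ω s) ⁻¹' {ext g s} := by
    ext ω
    simp only [Set.mem_setOf_eq, Set.mem_iUnion, Set.mem_iInter, Finset.mem_range,
      Set.mem_preimage, Set.mem_singleton_iff, exists_prop]
    constructor
    · intro h
      refine ⟨_, h, fun s hs => ?_⟩
      simp [hext, hs]
    · rintro ⟨g, hg, h⟩
      have he : (fun s : Fin t => ω (s : ℕ)) = g := by
        funext s
        have hs := h s s.isLt
        simpa [hext, s.isLt] using hs
      rwa [he]
  have hdisj : (↑G : Set (Fin t → Fin C → Fin N)).PairwiseDisjoint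
      (fun g => ⋂ s ∈ Finset.range t, (fun ω : ℕ → Fin C → Fin N => ω s) ⁻¹' {ext g s}) := by
    intro g1 _ g2 _ hne
    rw [Function.onFun, Set.disjoint_left]
    intro ω h1 h2
    apply hne
    funext s c
    simp only [Set.mem_iInter, Finset.mem_range, Set.mem_preimage, Set.mem_singleton_iff] at h1 h2
    have e1 := h1 s s.isLt
    have e2 := h2 s s.isLt
    simp only [hext, dif_pos s.isLt, Fin.eta] at e1 e2
    rw [← e1, ← e2]
  rw [hset, measure_biUnion_finset hdisj (fun g _ =>
    MeasurableSet.biInter (Finset.range t).countable_toSet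
      (fun s _ => (measurable_pi_apply s) (measurableSet_singleton _)))]
  rw [Finset.sum_congr rfl (fun g _ => meas_fixed hμ t (ext g)), Finset.sum_const, nsmul_eq_mul]

lemma count_hits (N t : ℕ) (x0 : Fin N) :
    (Finset.univ.filter (fun h : Fin t → Fin N => ∃ s, h s = x0)).card
      = N ^ t - (N - 1) ^ t := by
  classical
  have hneg : (Finset.univ.filter (fun h : Fin t → Fin N => ¬ ∃ s, h s = x0))
      = Fintype.piFinset (fun _ : Fin t => Finset.univ.erase x0) := by
    ext h
    simp [Fintype.mem_piFinset, not_exists]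
  have hcardneg : (Finset.univ.filter (fun h : Fin t → Fin N => ¬ ∃ s, h s = x0)).card
      = (N - 1) ^ t := by
    rw [hneg, Fintype.card_piFinset]
    simp [Finset.card_erase_of_mem, Finset.card_univ]
  have htot := Finset.card_filter_add_card_filter_not
    (s := (Finset.univ : Finset (Fin t → Fin N))) (p := fun h => ∃ s, h s = x0)
  have huniv : (Finset.univ : Finset (Fin t → Fin N)).card = N ^ t := by
    simp [Finset.card_univ]
  rw [hcardneg, huniv] at htot
  exact Nat.eq_sub_of_add_eq htot

lemma count_G (N C t : ℕ) (x0 : Fin N) :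
    (Finset.univ.filter (fun g : Fin t → Fin C → Fin N => ∀ c, ∃ s, g s c = x0)).card
      = (N ^ t - (N - 1) ^ t) ^ C := by
  classical
  set S := Finset.univ.filter (fun h : Fin t → Fin N => ∃ s, h s = x0) with hS
  have hb : (Finset.univ.filter
        (fun g : Fin t → Fin C → Fin N => ∀ c, ∃ s, g s c = x0)).card
      = (Fintype.piFinset (fun _ : Fin C => S)).card := by
    refine Finset.card_nbij' (i := Function.swap) (j := Function.swap) ?_ ?_ ?_ ?_
    · intro g hg
      simp only [Finset.mem_coe, Finset.mem_filter, Finset.mem_univ, true_and] at hg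
      simp only [Finset.mem_coe, Fintype.mem_piFinset, hS, Finset.mem_filter, Finset.mem_univ, true_and]
      exact hg
    · intro h hh
      simp only [Finset.mem_coe, Fintype.mem_piFinset, hS, Finset.mem_filter, Finset.mem_univ, true_and] at hh
      simp only [Finset.mem_coe, Finset.mem_filter, Finset.mem_univ, true_and]
      exact hh
    · intro g _; rfl
    · intro h _; rfl
  rw [hb, Fintype.card_piFinset, Finset.prod_const, Finset.card_univ, Fintype.card_fin,
    hS, count_hits N t x0]

lemma measE (hμ : IsCouponMeasure μ) (hN : 0 < N) (t : ℕ) (x0 : Fin N) :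
    μ {ω : ℕ → Fin C → Fin N | ∀ c : Fin C, ∃ s < t, ω s c = x0}
      = (((N ^ t - (N - 1) ^ t) ^ C : ℕ) : ℝ≥0∞) * (((N : ℝ≥0∞) ^ C)⁻¹) ^ t := by
  classical
  have h1 : {ω : ℕ → Fin C → Fin N | ∀ c : Fin C, ∃ s < t, ω s c = x0}
      = {ω : ℕ → Fin C → Fin N | (fun s : Fin t => ω (s : ℕ)) ∈
          (Finset.univ.filter (fun g : Fin t → Fin C → Fin N => ∀ c, ∃ s, g s c = x0))} := by
    ext ω
    simp only [Set.mem_setOf_eq, Finset.mem_filter, Finset.mem_univ, true_and]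
    exact forall_congr' fun c =>
      ⟨fun ⟨s, hs, h⟩ => ⟨⟨s, hs⟩, h⟩, fun ⟨s, h⟩ => ⟨s, s.isLt, h⟩⟩
  rw [h1, meas_event hμ hN, count_G N C t x0]

lemma measSetE (t : ℕ) (x0 : Fin N) :
    MeasurableSet {ω : ℕ → Fin C → Fin N | ∀ c : Fin C, ∃ s < t, ω s c = x0} := by
  have he : {ω : ℕ → Fin C → Fin N | ∀ c : Fin C, ∃ s < t, ω s c = x0}
      = ⋂ c : Fin C, ⋃ s : ℕ, ⋃ _ : s < t, {ω : ℕ → Fin C → Fin N | ω s c = x0} := by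
    ext ω; simp
  rw [he]
  refine MeasurableSet.iInter fun c => MeasurableSet.iUnion fun s =>
    MeasurableSet.iUnion fun _ => ?_
  have h2 : {ω : ℕ → Fin C → Fin N | ω s c = x0}
      = (fun ω : ℕ → Fin C → Fin N => ω s c) ⁻¹' {x0} := rfl
  rw [h2]
  exact ((measurable_pi_apply c).comp (measurable_pi_apply s)) (measurableSet_singleton _)

lemma measSetZ :
    MeasurableSet (⋃ c : Fin C, ⋃ x : Fin N, ⋂ s : ℕ,
      {ω : ℕ → Fin C → Fin N | ω s c ≠ x}) := by
  refine MeasurableSet.iUnion fun c => MeasurableSet.iUnion fun x =>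
    MeasurableSet.iInter fun s => ?_
  have h2 : {ω : ℕ → Fin C → Fin N | ω s c ≠ x}
      = ((fun ω : ℕ → Fin C → Fin N => ω s c) ⁻¹' {x})ᶜ := rfl
  rw [h2]
  exact (((measurable_pi_apply c).comp (measurable_pi_apply s))
    (measurableSet_singleton _)).compl

lemma measZ (hμ : IsCouponMeasure μ) (hN : 0 < N) :
    μ (⋃ c : Fin C, ⋃ x : Fin N, ⋂ s : ℕ, {ω : ℕ → Fin C → Fin N | ω s c ≠ x}) = 0 := by
  haveI := hμ.1
  refine measure_iUnion_null fun c => measure_iUnion_null fun x => ?_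
  have hNC0 : ((N : ℝ≥0∞) ^ C) ≠ 0 := pow_ne_zero _ (by exact_mod_cast hN.ne')
  have hNCtop : ((N : ℝ≥0∞) ^ C) ≠ ∞ := ENNReal.pow_ne_top (ENNReal.natCast_ne_top N)
  set q : ℝ≥0∞ := 1 - ((N : ℝ≥0∞) ^ C)⁻¹ with hq
  have hqlt : q < 1 :=
    ENNReal.sub_lt_self ENNReal.one_ne_top one_ne_zero (ENNReal.inv_ne_zero.mpr hNCtop)
  have hbound : ∀ t : ℕ,
      μ (⋂ s : ℕ, {ω : ℕ → Fin C → Fin N | ω s c ≠ x}) ≤ q ^ t := by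
    intro t
    have hsub : (⋂ s : ℕ, {ω : ℕ → Fin C → Fin N | ω s c ≠ x})
        ⊆ ⋂ s ∈ Finset.range t,
          (fun ω : ℕ → Fin C → Fin N => ω s) ⁻¹' {f : Fin C → Fin N | f c ≠ x} := by
      intro ω hω
      simp only [Set.mem_iInter, Set.mem_setOf_eq] at hω
      simp only [Set.mem_iInter, Finset.mem_range, Set.mem_preimage, Set.mem_setOf_eq]
      exact fun s _ => hω s
    refine (measure_mono hsub).trans ?_
    rw [meas_cylinder hμ t _]
    refine le_trans (Finset.prod_le_pow_card _ _ q ?_) (le_of_eq (by rw [Finset.card_range]))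
    intro s _
    have hcompl : (fun ω : ℕ → Fin C → Fin N => ω s) ⁻¹' {f : Fin C → Fin N | f c ≠ x}
        = ((fun ω : ℕ → Fin C → Fin N => ω s) ⁻¹' {f : Fin C → Fin N | f c = x})ᶜ := by
      ext ω; simp
    have hmeas : MeasurableSet
        ((fun ω : ℕ → Fin C → Fin N => ω s) ⁻¹' {f : Fin C → Fin N | f c = x}) :=
      (measurable_pi_apply s) (Set.toFinite _).measurableSet
    rw [hcompl, prob_compl_eq_one_sub hmeas, hq]
    refine tsub_le_tsub_left ?_ 1
    have hss : (fun ω : ℕ → Fin C → Fin N => ω s) ⁻¹' {(fun _ => x : Fin C → Fin N)}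
        ⊆ (fun ω : ℕ → Fin C → Fin N => ω s) ⁻¹' {f : Fin C → Fin N | f c = x} := by
      intro ω hω
      simp only [Set.mem_preimage, Set.mem_singleton_iff] at hω
      simp only [Set.mem_preimage, Set.mem_setOf_eq, hω]
    calc ((N : ℝ≥0∞) ^ C)⁻¹ = μ _ := (meas_single hμ s _).symm
      _ ≤ _ := measure_mono hss
  have htend : Filter.Tendsto (fun t : ℕ => q ^ t) Filter.atTop (nhds 0) :=
    ENNReal.tendsto_pow_atTop_nhds_zero_of_lt_one hqlt
  exact le_antisymm (ge_of_tendsto' htend hbound) zero_le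

lemma nat_ineq (N C t : ℕ) (hN : 2 ≤ N) (h2t : 2 ^ t ≤ C) :
    2 * (N ^ t - (N - 1) ^ t) ^ C ≤ N ^ (C * t) := by
  have hb : (N - 1) ^ t ≤ N ^ t := Nat.pow_le_pow_left (by omega) t
  have key : (2 : ℝ) * ((N ^ t - (N - 1) ^ t : ℕ) : ℝ) ^ C ≤ ((N : ℝ) ^ t) ^ C := by
    set n : ℝ := (N : ℝ) with hn
    have hn2 : (2 : ℝ) ≤ n := by rw [hn]; exact_mod_cast hN
    have hnpos : (0 : ℝ) < n := by linarith
    have hntpos : (0 : ℝ) < n ^ t := by positivity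
    have hbr : ((N - 1 : ℕ) : ℝ) = n - 1 := by
      have h1 : (1 : ℕ) ≤ N := by omega
      push_cast [h1]; ring
    have hcast : ((N ^ t - (N - 1) ^ t : ℕ) : ℝ) = n ^ t - (n - 1) ^ t := by
      rw [Nat.cast_sub hb]; push_cast [hbr]; ring
    set u : ℝ := ((n - 1) / n) ^ t with hu
    have hq0 : (0 : ℝ) ≤ (n - 1) / n := by
      apply div_nonneg <;> linarith
    have hu0 : 0 ≤ u := pow_nonneg hq0 t
    have hu1 : u ≤ 1 := by
      rw [hu]
      refine pow_le_one₀ hq0 ?_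
      rw [div_le_one hnpos]; linarith
    have hu_half : ((1 : ℝ) / 2) ^ t ≤ u := by
      refine pow_le_pow_left₀ (by norm_num) ?_ t
      rw [le_div_iff₀ hnpos]; linarith
    have hfrac : ((N ^ t - (N - 1) ^ t : ℕ) : ℝ) / n ^ t = 1 - u := by
      rw [hcast, hu, div_pow, sub_div, div_self hntpos.ne']
    have h1u : (1 : ℝ) - u ≤ Real.exp (-u) := by
      have := Real.add_one_le_exp (-u); linarith
    have hfr0 : 0 ≤ (1 : ℝ) - u := by linarith
    have hCpow : ((1 : ℝ) - u) ^ C ≤ Real.exp (-u) ^ C := pow_le_pow_left₀ hfr0 h1u C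
    have hexp : Real.exp (-u) ^ C = Real.exp (-(u * C)) := by
      rw [← Real.exp_nat_mul]; ring_nf
    have huC : (1 : ℝ) ≤ u * C := by
      have hC' : ((2 : ℝ) ^ t) ≤ (C : ℝ) := by exact_mod_cast h2t
      calc (1 : ℝ) = (1 / 2 : ℝ) ^ t * 2 ^ t := by
            rw [div_pow, one_pow]; field_simp
        _ ≤ u * C := mul_le_mul hu_half hC' (by positivity) hu0
    have hexp_le : Real.exp (-(u * C)) ≤ Real.exp (-1) := by
      apply Real.exp_le_exp.mpr; linarith
    have hexp_half : Real.exp (-1 : ℝ) ≤ 1 / 2 := by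
      have h2e : (2 : ℝ) ≤ Real.exp 1 := by
        have := Real.add_one_le_exp (1 : ℝ); linarith
      rw [Real.exp_neg]
      have h12 : (1 / 2 : ℝ) = 2⁻¹ := by norm_num
      rw [h12]
      exact inv_anti₀ (by norm_num) h2e
    have hmain : (((N ^ t - (N - 1) ^ t : ℕ) : ℝ) / n ^ t) ^ C ≤ 1 / 2 := by
      rw [hfrac]
      calc ((1 : ℝ) - u) ^ C ≤ Real.exp (-(u * C)) := by rw [← hexp]; exact hCpow
        _ ≤ Real.exp (-1) := hexp_le
        _ ≤ 1 / 2 := hexp_half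
    have hdiv : (((N ^ t - (N - 1) ^ t : ℕ) : ℝ)) ^ C / (n ^ t) ^ C ≤ 1 / 2 := by
      rw [← div_pow]; exact hmain
    rw [div_le_iff₀ (by positivity)] at hdiv
    linarith
  have hfin : ((2 * (N ^ t - (N - 1) ^ t) ^ C : ℕ) : ℝ) ≤ ((N ^ (C * t) : ℕ) : ℝ) := by
    push_cast
    calc (2 : ℝ) * ((N ^ t - (N - 1) ^ t : ℕ) : ℝ) ^ C ≤ ((N : ℝ) ^ t) ^ C := key
      _ = (N : ℝ) ^ (C * t) := by rw [← pow_mul, mul_comm]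
  exact_mod_cast hfin

lemma ennreal_half (N C t : ℕ) (hN : 0 < N)
    (h : 2 * (N ^ t - (N - 1) ^ t) ^ C ≤ N ^ (C * t)) :
    (((N ^ t - (N - 1) ^ t) ^ C : ℕ) : ℝ≥0∞) * (((N : ℝ≥0∞) ^ C)⁻¹) ^ t ≤ 2⁻¹ := by
  have hpow : (((N : ℝ≥0∞) ^ C)⁻¹) ^ t = (((N ^ (C * t) : ℕ) : ℝ≥0∞))⁻¹ := by
    rw [← ENNReal.inv_pow, ← pow_mul]
    push_cast
    ring_nf
  rw [hpow]
  set A : ℝ≥0∞ := (((N ^ t - (N - 1) ^ t) ^ C : ℕ) : ℝ≥0∞) with hA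
  set X : ℝ≥0∞ := ((N ^ (C * t) : ℕ) : ℝ≥0∞) with hX
  have hX0 : X ≠ 0 := by
    rw [hX]
    exact_mod_cast (Nat.pos_of_ne_zero (by positivity)).ne'
  have hXtop : X ≠ ∞ := ENNReal.natCast_ne_top _
  have h2A : (2 : ℝ≥0∞) * A ≤ X := by
    rw [hA, hX]
    exact_mod_cast h
  have hAle : A ≤ 2⁻¹ * X := by
    calc A = 2⁻¹ * (2 * A) := by
          rw [← mul_assoc, ENNReal.inv_mul_cancel (by norm_num) (by norm_num), one_mul]
      _ ≤ 2⁻¹ * X := mul_le_mul_right h2A _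
  calc A * X⁻¹ ≤ (2⁻¹ * X) * X⁻¹ := mul_le_mul_left hAle _
    _ = 2⁻¹ := by rw [mul_assoc, ENNReal.mul_inv_cancel hX0 hXtop, mul_one]

end CouponAux

/-- In the parallel coupon collector problem with `N ≥ 2`
coupon types and `C ≥ 1` collectors, the cover time satisfies
`E[T(N, C)] ≥ log C / 6`. -/
theorem coupon_cover_time_log_lower_bound
    (N C : ℕ) (hN : 2 ≤ N) (hC : 1 ≤ C)
    (μ : Measure (ℕ → Fin C → Fin N)) (hμ : IsCouponMeasure μ) :
    ENNReal.ofReal (Real.log C / 6) ≤ ∫⁻ ω, (coverTime ω : ℝ≥0∞) ∂μ := by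
  classical
  haveI := hμ.1
  by_cases hC1 : C = 1
  · subst hC1
    simp [Real.log_one]
  have hC2 : 2 ≤ C := by omega
  have hN0 : 0 < N := by omega
  set t := Nat.log 2 C with hT
  have ht1 : 1 ≤ t := Nat.log_pos one_lt_two hC2
  have h2t : 2 ^ t ≤ C := Nat.pow_log_le_self 2 (by omega)
  have hCub : C < 2 ^ (t + 1) := Nat.lt_pow_succ_log_self one_lt_two C
  set x0 : Fin N := ⟨0, hN0⟩ with hx0
  set E := {ω : ℕ → Fin C → Fin N | ∀ c : Fin C, ∃ s < t, ω s c = x0} with hE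
  set Z := ⋃ c : Fin C, ⋃ x : Fin N, ⋂ s : ℕ, {ω : ℕ → Fin C → Fin N | ω s c ≠ x} with hZ
  have hEmeas : MeasurableSet E := CouponAux.measSetE t x0
  have hZmeas : MeasurableSet Z := CouponAux.measSetZ
  have hZnull : μ Z = 0 := CouponAux.measZ hμ hN0
  have hμE : μ E ≤ 2⁻¹ := by
    rw [hE, CouponAux.measE hμ hN0 t x0]
    exact CouponAux.ennreal_half N C t hN0 (CouponAux.nat_ineq N C t hN h2t)
  have hEc : 2⁻¹ ≤ μ Eᶜ := by
    rw [prob_compl_eq_one_sub hEmeas]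
    calc (2⁻¹ : ℝ≥0∞) = 1 - 2⁻¹ := ENNReal.one_sub_inv_two.symm
      _ ≤ 1 - μ E := tsub_le_tsub_left hμE 1
  have hAmeas : MeasurableSet (Eᶜ ∩ Zᶜ) := hEmeas.compl.inter hZmeas.compl
  have hA : 2⁻¹ ≤ μ (Eᶜ ∩ Zᶜ) := by
    rw [measure_inter_conull (by rwa [compl_compl])]
    exact hEc
  have hpt : ∀ ω, (Eᶜ ∩ Zᶜ).indicator (fun _ => (t : ℝ≥0∞)) ω ≤ (coverTime ω : ℝ≥0∞) := by
    intro ω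
    by_cases hω : ω ∈ Eᶜ ∩ Zᶜ
    · rw [Set.indicator_of_mem hω]
      refine Nat.cast_le.mpr ?_
      obtain ⟨hωE, hωZ⟩ := hω
      rw [hZ] at hωZ
      simp only [Set.mem_compl_iff, Set.mem_iUnion, Set.mem_iInter, Set.mem_setOf_eq,
        not_exists, not_forall, not_not] at hωZ
      have hne : {t' | ∀ c : Fin C, ∀ x : Fin N, ∃ s < t', ω s c = x}.Nonempty := by
        choose F hF using fun p : Fin C × Fin N => hωZ p.1 p.2
        refine ⟨(Finset.univ.sup F) + 1, fun c x => ⟨F (c, x), ?_, hF (c, x)⟩⟩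
        exact Nat.lt_succ_of_le (Finset.le_sup (Finset.mem_univ (c, x)))
      refine le_csInf hne fun t' ht' => ?_
      by_contra hlt
      push_neg at hlt
      apply hωE
      intro c
      obtain ⟨s, hs, h⟩ := ht' c x0
      exact ⟨s, hs.trans hlt, h⟩
    · rw [Set.indicator_of_notMem hω]
      exact zero_le
  have hint : (t : ℝ≥0∞) * μ (Eᶜ ∩ Zᶜ) ≤ ∫⁻ ω, (coverTime ω : ℝ≥0∞) ∂μ := by
    calc (t : ℝ≥0∞) * μ (Eᶜ ∩ Zᶜ)
        = ∫⁻ ω, (Eᶜ ∩ Zᶜ).indicator (fun _ => (t : ℝ≥0∞)) ω ∂μ := by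
          rw [lintegral_indicator_const hAmeas]
      _ ≤ ∫⁻ ω, (coverTime ω : ℝ≥0∞) ∂μ := lintegral_mono hpt
  have hfinal : ENNReal.ofReal (Real.log C / 6) ≤ (t : ℝ≥0∞) * 2⁻¹ := by
    have hlog : Real.log C ≤ 3 * t := by
      have h1 : (C : ℝ) ≤ (2 : ℝ) ^ (t + 1) := by exact_mod_cast hCub.le
      have h2 : Real.log C ≤ (t + 1) * Real.log 2 := by
        calc Real.log C ≤ Real.log ((2 : ℝ) ^ (t + 1)) := by
              apply Real.log_le_log (by positivity) h1
          _ = (t + 1) * Real.log 2 := by rw [Real.log_pow]; push_cast; ring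
      have h3 : Real.log 2 < 1 := by
        have := Real.log_two_lt_d9; linarith
      have ht1' : (1 : ℝ) ≤ (t : ℝ) := by exact_mod_cast ht1
      nlinarith [Real.log_nonneg (by exact_mod_cast hC : (1 : ℝ) ≤ (C : ℝ)),
        Real.log_pos (by norm_num : (1:ℝ) < 2)]
    calc ENNReal.ofReal (Real.log C / 6) ≤ ENNReal.ofReal ((t : ℝ) / 2) :=
          ENNReal.ofReal_le_ofReal (by linarith)
      _ = (t : ℝ≥0∞) * 2⁻¹ := by
          rw [div_eq_mul_inv, ENNReal.ofReal_mul (by positivity),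
            ENNReal.ofReal_natCast, ENNReal.ofReal_inv_of_pos (by norm_num),
            ENNReal.ofReal_ofNat]
  refine hfinal.trans (le_trans ?_ hint)
  exact mul_le_mul_right hA _
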